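/- Let ψ : G → G be a commutator-central endomorphism of a group G and let β ∈ 𝓔. For g ∈ G let η_g : G → G be the map η_g(h) = g ∘_{ψ,β} h. Then the collection N = {η_g : g ∈ G} acts regularly on G: for all h, k ∈ G there exists a unique g ∈ G such that g ∘_{ψ,β} h = k. -/

import Mathlib

/-- Evaluation of an element of the free group `𝓔 = FreeGroup (Monoid.End G)`
at an element `g : G`: the image of `α` under the homomorphism `𝓔 → G`
given by `FreeGroup.lift (fun φ => φ g)`. -/
def evalE {G : Type*} [Group G] (α : FreeGroup (Monoid.End G)) (g : G) : G :=
  FreeGroup.lift (fun φ : Monoid.End G => φ g) α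

/-- The binary operation `g ∘_{ψ,α} h = g · ψ_α(g) · h · ψ_α(g)⁻¹`, where
`ψ_α(g) = ψ (α(g))`. -/
def op {G : Type*} [Group G] (ψ : Monoid.End G) (α : FreeGroup (Monoid.End G)) (g h : G) : G :=
  g * ψ (evalE α g) * h * (ψ (evalE α g))⁻¹

section Aux

variable {G : Type*} [Group G]

/-- `evalE` at a product agrees with the product of evaluations, modulo the
commutator subgroup. -/
lemma evalE_mul_mem_commutator (β : FreeGroup (Monoid.End G)) (a b : G) :
    (evalE β a * evalE β b)⁻¹ * evalE β (a * b) ∈ commutator G := by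
  rw [← QuotientGroup.eq (s := commutator G)]
  have : (Abelianization.of (G := G)) (evalE β a * evalE β b)
      = (Abelianization.of (G := G)) (evalE β (a * b)) := by
    have key : ((Abelianization.of (G := G)).comp
          (FreeGroup.lift fun φ : Monoid.End G => φ (a*b)))
        = ((Abelianization.of (G := G)).comp
            (FreeGroup.lift fun φ : Monoid.End G => φ a)) *
          ((Abelianization.of (G := G)).comp
            (FreeGroup.lift fun φ : Monoid.End G => φ b)) := by
      apply FreeGroup.ext_hom
      intro φ
      simp [map_mul]
    have := DFunLike.congr_fun key β
    simpa [evalE, map_mul, MonoidHom.mul_apply] using this.symm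
  exact this

lemma evalE_one (β : FreeGroup (Monoid.End G)) : evalE β (1 : G) = 1 := by
  have key : (FreeGroup.lift fun φ : Monoid.End G => φ (1 : G))
      = (1 : FreeGroup (Monoid.End G) →* G) := by
    apply FreeGroup.ext_hom; intro φ; simp
  have := DFunLike.congr_fun key β
  simpa [evalE] using this

end Aux

open scoped commutatorElement

/-- the family `N = {η_g}`, `η_g(h) = g ∘_{ψ,β} h`, acts regularly on
`G`: for all `h k` there is a unique `g` with `g ∘_{ψ,β} h = k`. -/
theorem op_regular {G : Type*} [Group G]
    (ψ : Monoid.End G) (hψ : ∀ g h : G, ψ ⁅g, h⁆ ∈ Subgroup.center G)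
    (β : FreeGroup (Monoid.End G)) (h k : G) :
    ∃! g : G, op ψ β g h = k := by
  classical
  set Z := Subgroup.center G with hZ
  -- ψ maps the commutator subgroup into the center
  have hcomm : commutator G ≤ Z.comap (ψ : G →* G) := by
    rw [commutator_def, Subgroup.commutator_le]
    intro g₁ _ g₂ _
    exact hψ g₁ g₂
  set Q : G →* G ⧸ Z := QuotientGroup.mk' Z with hQ
  set γ : G → G := fun x => ψ (evalE β x) with hγ
  set f : G → G ⧸ Z := fun x => Q (γ x) with hf
  -- f is multiplicative
  have hfmul : ∀ a b : G, f (a * b) = f a * f b := by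
    intro a b
    have h1 := evalE_mul_mem_commutator β a b
    have h2 : ψ ((evalE β a * evalE β b)⁻¹ * evalE β (a * b)) ∈ Z := hcomm h1
    have h3 : Q (ψ ((evalE β a * evalE β b)⁻¹ * evalE β (a * b))) = 1 := by
      rwa [← MonoidHom.mem_ker, hQ, QuotientGroup.ker_mk']
    simp only [map_mul, map_inv] at h3
    rw [inv_mul_eq_one] at h3
    simp only [hf, hγ]
    exact h3.symm
  have hf1 : f 1 = 1 := by simp [hf, hγ, evalE_one]
  have hfinv : ∀ a : G, f a⁻¹ = (f a)⁻¹ := by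
    intro a
    have := hfmul a a⁻¹
    rw [mul_inv_cancel, hf1] at this
    exact eq_inv_of_mul_eq_one_right this.symm
  -- images of ψ commute in G ⧸ Z
  have hpsicomm : ∀ a b : G, Q (ψ a) * Q (ψ b) = Q (ψ b) * Q (ψ a) := by
    intro a b
    have h1 : Q (ψ ⁅a, b⁆) = 1 := by
      have := hψ a b
      rwa [← MonoidHom.mem_ker, hQ, QuotientGroup.ker_mk']
    have h2 : ⁅Q (ψ a), Q (ψ b)⁆ = 1 := by
      rw [← map_commutatorElement, ← map_commutatorElement]
      exact h1
    have := commutatorElement_eq_one_iff_commute.mp h2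
    exact this.eq
  -- any two values of f commute
  have hfcomm : ∀ a b : G, f a * f b = f b * f a := fun a b => hpsicomm _ _
  -- f of anything commutes with Q (ψ x)
  have hfQcomm : ∀ (a x : G), f a * Q (ψ x) = Q (ψ x) * f a := fun a x => hpsicomm _ _
  -- key: if Q (γ g) = Q u then γ g = u * z with z central
  have hcentral : ∀ (g u : G), f g = Q u → ∀ t : G, γ g * t * (γ g)⁻¹ = u * t * u⁻¹ := by
    intro g u hgu t
    have : (γ g)⁻¹ * u ∈ Z := by
      have : Q (γ g) = Q u := hgu
      exact (QuotientGroup.eq (s := Z)).mp (by simpa [hQ] using this)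
    rw [hZ, Subgroup.mem_center_iff] at this
    have h1 := this t
    -- t * ((γ g)⁻¹ * u) = ((γ g)⁻¹ * u) * t
    have : u * t * u⁻¹ = γ g * ((γ g)⁻¹ * u) * t * u⁻¹ := by group
    rw [this, mul_assoc (γ g) _ t, ← h1]
    group
  -- the candidate solution
  set u : G := γ k * (γ h)⁻¹ with hu
  set g₀ : G := k * u * h⁻¹ * u⁻¹ with hg₀
  have hQu : Q u = f k * (f h)⁻¹ := by simp [hu, hf, map_mul]
  -- f g₀ = Q u
  have hfg₀ : f g₀ = Q u := by
    have e1 : f g₀ = f k * f u * f h⁻¹ * f u⁻¹ := by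
      rw [hg₀, hfmul, hfmul, hfmul]
    have c : f u * (f h)⁻¹ = (f h)⁻¹ * f u := Commute.eq (Commute.inv_right (hfcomm u h))
    rw [e1, hfinv, hfinv, hQu, mul_assoc (f k), c]
    group
  refine ⟨g₀, ?_, ?_⟩
  · -- existence
    have hconj := hcentral g₀ u hfg₀
    show op ψ β g₀ h = k
    have : op ψ β g₀ h = g₀ * (γ g₀ * h * (γ g₀)⁻¹) := by
      simp [op, hγ]; group
    rw [this, hconj h, hg₀]
    group
  · -- uniqueness
    intro g hg
    have hβg : op ψ β g h = g * (γ g * h * (γ g)⁻¹) := by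
      simp [op, hγ]; group
    -- f k = f g * f h
    have hfk : f k = f g * f h := by
      rw [← hg, hβg, hfmul, hfmul, hfmul, hfinv, hfcomm (γ g) h]
      group
    have hfg : f g = Q u := by
      rw [hQu, hfk]; group
    have hconj := hcentral g u hfg h
    rw [hβg, hconj] at hg
    rw [hg₀, ← hg]
    group
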